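/- Let R be a commutative ring and let 1 ≤ k ≤ m be integers. Let (a_{ij}), with 1 ≤ i ≤ k and 1 ≤ j ≤ m, be a k × m matrix with entries in R such that Σ_{j=1}^m a_{ij} = 0 for every i = 1, …, k. Then det((a_{ij})_{1 ≤ i, j ≤ k}) = (−1)^k Σ_f Π_{i=1}^k a_{i f(i)}, where the sum runs over all maps f : {1, …, k} → {1, …, m} such that f(S) ⊄ S for every nonempty subset S ⊆ {1, …, k} (i.e., for every nonempty S ⊆ {1, …, k} there exists i ∈ S with f(i) ∉ S). -/

import Mathlib

namespace Stmt5

variable {k m : ℕ}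

/-- extend `f : Fin k → Fin m` to `Fin m → Fin m`, identity outside the first `k`. -/
def fh (f : Fin k → Fin m) : Fin m → Fin m :=
  fun j => if h : (j : ℕ) < k then f ⟨j, h⟩ else j

lemma fh_castLE (hkm : k ≤ m) (f : Fin k → Fin m) (i : Fin k) :
    fh f (Fin.castLE hkm i) = f i := by
  simp [fh, Fin.castLE, i.isLt]

lemma fh_of_not_lt (f : Fin k → Fin m) {j : Fin m} (h : ¬ (j : ℕ) < k) : fh f j = j := by
  simp [fh, h]

/-- all iterates of a periodic point starting in the image of `Fin k` stay there. -/
lemma iter_lt (f : Fin k → Fin m) {x : Fin m} {p : ℕ} (hp : 0 < p)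
    (hper : (fh f)^[p] x = x) (hx : (x:ℕ) < k) (n : ℕ) : (((fh f)^[n] x : Fin m) : ℕ) < k := by
  by_contra hge
  push_neg at hge
  -- then all later iterates are constant, equal to y := (fh f)^[n] x
  set y := (fh f)^[n] x with hy
  have hconst : ∀ q, (fh f)^[q] y = y := by
    intro q
    induction q with
    | zero => rfl
    | succ q ih => rw [Function.iterate_succ_apply', ih, fh_of_not_lt f (by omega)]
  -- but some iterate of y equals x
  have hmul : ∀ q, (fh f)^[q * p] x = x := by
    intro q
    induction q with
    | zero => simp
    | succ q ih => rw [Nat.succ_mul, Function.iterate_add_apply, hper, ih]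
  obtain ⟨q, hq⟩ : ∃ q, n ≤ q * p := ⟨n, Nat.le_mul_of_pos_right n hp⟩
  have : (fh f)^[q * p - n] y = x := by
    rw [hy, ← Function.iterate_add_apply, Nat.sub_add_cancel hq, hmul]
  rw [hconst] at this
  omega

end Stmt5
namespace Stmt5

section Orbit
set_option linter.unusedSectionVars false

variable {k m : ℕ} (hkm : k ≤ m) (f : Fin k → Fin m) (i0 : Fin k) (p : ℕ)
  (hp0 : 0 < p) (hper : (fh f)^[p] (Fin.castLE hkm i0) = Fin.castLE hkm i0)

/-- membership in the orbit of `i0`. -/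
def inO (j : Fin k) : Prop := ∃ n, (fh f)^[n] (Fin.castLE hkm i0) = Fin.castLE hkm j

/-- the "next" function on `Fin k`. -/
def nxt (j : Fin k) : Fin k := if h : ((f j : Fin m) : ℕ) < k then ⟨f j, h⟩ else j

include hp0 hper

lemma orbit_period {j : Fin k} (hj : inO hkm f i0 j) :
    (fh f)^[p] (Fin.castLE hkm j) = Fin.castLE hkm j := by
  obtain ⟨n, hn⟩ := hj
  rw [← hn, ← Function.iterate_add_apply, Nat.add_comm, Function.iterate_add_apply, hper]

lemma orbit_lt {j : Fin k} (hj : inO hkm f i0 j) : ((f j : Fin m) : ℕ) < k := by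
  have h1 : f j = (fh f)^[1] (Fin.castLE hkm j) := by
    simp [fh_castLE]
  rw [h1]
  exact iter_lt f hp0 (orbit_period hkm f i0 p hp0 hper hj) j.isLt 1

lemma castLE_nxt {j : Fin k} (hj : inO hkm f i0 j) :
    Fin.castLE hkm (nxt f j) = f j := by
  have := orbit_lt hkm f i0 p hp0 hper hj
  simp only [nxt, this, dif_pos]
  ext; simp

lemma inO_nxt {j : Fin k} (hj : inO hkm f i0 j) : inO hkm f i0 (nxt f j) := by
  obtain ⟨n, hn⟩ := hj
  exact ⟨n + 1, by rw [Function.iterate_succ_apply', hn, castLE_nxt hkm f i0 p hp0 hper ⟨n, hn⟩,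
    fh_castLE]⟩

omit hp0 hper in
lemma inO_i0 : inO hkm f i0 i0 := ⟨0, rfl⟩

/-- `fh f` is injective on the orbit. -/
lemma nxt_injOn {x y : Fin k} (hx : inO hkm f i0 x) (hy : inO hkm f i0 y)
    (hxy : f x = f y) : x = y := by
  have key : ∀ z : Fin k, inO hkm f i0 z →
      Fin.castLE hkm z = (fh f)^[p-1] (f z) := by
    intro z hz
    have := orbit_period hkm f i0 p hp0 hper hz
    conv_lhs => rw [← this]
    conv_lhs => rw [show p = (p - 1) + 1 by omega, Function.iterate_succ_apply, fh_castLE]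
  have := (key x hx).trans (by rw [hxy, ← key y hy])
  exact Fin.castLE_injective hkm this

lemma iterate_nxt {x : Fin k} (hx : inO hkm f i0 x) (n : ℕ) :
    Fin.castLE hkm ((nxt f)^[n] x) = (fh f)^[n] (Fin.castLE hkm x) ∧
      inO hkm f i0 ((nxt f)^[n] x) := by
  induction n with
  | zero => exact ⟨rfl, hx⟩
  | succ n ih =>
    obtain ⟨h1, h2⟩ := ih
    rw [Function.iterate_succ_apply', Function.iterate_succ_apply']
    refine ⟨?_, inO_nxt hkm f i0 p hp0 hper h2⟩
    rw [castLE_nxt hkm f i0 p hp0 hper h2, ← h1, fh_castLE]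

/-- the orbit is a single cycle of `nxt`. -/
lemma orbit_reach {x y : Fin k} (hx : inO hkm f i0 x) (hy : inO hkm f i0 y) :
    ∃ n, (nxt f)^[n] x = y := by
  obtain ⟨nx, hnx⟩ := hx
  obtain ⟨ny, hny⟩ := hy
  have hmul : ∀ q, (fh f)^[q * p] (Fin.castLE hkm i0) = Fin.castLE hkm i0 := by
    intro q
    induction q with
    | zero => simp
    | succ q ih => rw [Nat.succ_mul, Function.iterate_add_apply, hper, ih]
  refine ⟨nx * p + ny - nx, ?_⟩
  have hle : nx ≤ nx * p + ny := by nlinarith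
  have := (iterate_nxt hkm f i0 p hp0 hper ⟨nx, hnx⟩ (nx * p + ny - nx)).1
  apply Fin.castLE_injective hkm
  rw [this, ← hnx, ← Function.iterate_add_apply, Nat.sub_add_cancel hle,
    Nat.add_comm (nx * p) ny, Function.iterate_add_apply, hmul, hny]

end Orbit
end Stmt5
namespace Stmt5

variable {k m : ℕ}

/-- the "escaping" condition from the statement. -/
def Esc (hkm : k ≤ m) (f : Fin k → Fin m) : Prop :=
  ∀ S : Finset (Fin k), S.Nonempty → ∃ i ∈ S, f i ∉ S.image (Fin.castLE hkm)

lemma esc_iff (hkm : k ≤ m) (f : Fin k → Fin m) :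
    Esc hkm f ↔ ∀ i : Fin k, ¬ ∃ p, 0 < p ∧ (fh f)^[p] (Fin.castLE hkm i) = Fin.castLE hkm i := by
  constructor
  · rintro hesc i0 ⟨p, hp0, hper⟩
    classical
    obtain ⟨i, hiS, hfi⟩ := hesc (Finset.univ.filter (inO hkm f i0))
      ⟨i0, Finset.mem_filter.mpr ⟨Finset.mem_univ _, inO_i0 hkm f i0⟩⟩
    simp only [Finset.mem_filter, Finset.mem_univ, true_and] at hiS
    refine hfi ?_
    rw [Finset.mem_image]
    exact ⟨nxt f i, by simp [Finset.mem_filter, inO_nxt hkm f i0 p hp0 hper hiS],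
      castLE_nxt hkm f i0 p hp0 hper hiS⟩
  · intro hnoper S hS
    by_contra hcon
    push_neg at hcon
    obtain ⟨i0, hi0⟩ := hS
    have key : ∀ n, ∃ j ∈ S, (fh f)^[n] (Fin.castLE hkm i0) = Fin.castLE hkm j := by
      intro n
      induction n with
      | zero => exact ⟨i0, hi0, rfl⟩
      | succ n ih =>
        obtain ⟨j, hjS, hj⟩ := ih
        have := hcon j hjS
        rw [Finset.mem_image] at this
        obtain ⟨j', hj'S, hj'⟩ := this
        exact ⟨j', hj'S, by rw [Function.iterate_succ_apply', hj, fh_castLE, ← hj']⟩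
    obtain ⟨n1, n2, hne, heq⟩ : ∃ n1 n2 : ℕ, n1 ≠ n2 ∧
        (fh f)^[n1] (Fin.castLE hkm i0) = (fh f)^[n2] (Fin.castLE hkm i0) := by
      obtain ⟨n1, n2, hne, heq⟩ := Finite.exists_ne_map_eq_of_infinite
        (fun n : ℕ => (fh f)^[n] (Fin.castLE hkm i0))
      exact ⟨n1, n2, hne, heq⟩
    wlog hlt : n1 < n2 generalizing n1 n2
    · exact this n2 n1 hne.symm heq.symm (by omega)
    obtain ⟨j, hjS, hj⟩ := key n1
    refine hnoper j ⟨n2 - n1, by omega, ?_⟩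
    rw [← hj, ← Function.iterate_add_apply, Nat.sub_add_cancel hlt.le, ← heq]

end Stmt5
namespace Stmt5

variable {k m : ℕ}

/-- compatibility of a permutation with a map `f`. -/
def Compat (hkm : k ≤ m) (f : Fin k → Fin m) (σ : Equiv.Perm (Fin k)) : Prop :=
  ∀ i, (σ i = i → f i ≠ Fin.castLE hkm i) ∧ (σ i ≠ i → f i = Fin.castLE hkm (σ i))

open scoped Classical in
/-- the weight of a permutation: sign times `(-1)^(number of fixed points)`. -/
noncomputable def wt (σ : Equiv.Perm (Fin k)) : ℤ :=
  (Equiv.Perm.sign σ : ℤ) * (-1) ^ (Finset.univ.filter (fun i => σ i = i)).card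

open scoped Classical in
lemma counting (hkm : k ≤ m) (f : Fin k → Fin m) :
    (∑ σ : Equiv.Perm (Fin k), if Compat hkm f σ then wt σ else 0) =
      if Esc hkm f then (-1 : ℤ) ^ k else 0 := by
  by_cases hesc : Esc hkm f
  · -- only the identity is compatible
    have hnoper := (esc_iff hkm f).1 hesc
    have hne : ∀ i, f i ≠ Fin.castLE hkm i := by
      intro i h
      exact hnoper i ⟨1, one_pos, by simp [fh_castLE, h]⟩
    have honly : ∀ σ : Equiv.Perm (Fin k), Compat hkm f σ → σ = 1 := by
      intro σ hσ
      by_contra hσ1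
      obtain ⟨i, hi⟩ : ∃ i, σ i ≠ i := by
        by_contra hc; push_neg at hc; exact hσ1 (Equiv.ext hc)
      have hstay : ∀ j : Fin k, σ j ≠ j → σ (σ j) ≠ σ j := by
        intro j hj hc
        exact hj (σ.injective hc)
      have key : ∀ n : ℕ, (fh f)^[n] (Fin.castLE hkm i) = Fin.castLE hkm ((σ ^ n) i) ∧
          σ ((σ ^ n) i) ≠ (σ ^ n) i := by
        intro n
        induction n with
        | zero => exact ⟨rfl, hi⟩
        | succ n ih =>
          obtain ⟨h1, h2⟩ := ih
          rw [pow_succ', Equiv.Perm.mul_apply]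
          constructor
          · rw [Function.iterate_succ_apply', h1, fh_castLE, (hσ _).2 h2]
          · exact hstay _ h2
        
      refine hnoper i ⟨orderOf σ, ?_, ?_⟩
      · exact orderOf_pos σ
      · rw [(key (orderOf σ)).1, pow_orderOf_eq_one]; rfl
    rw [Finset.sum_eq_single 1]
    · have hc1 : Compat hkm f 1 := fun i => ⟨fun _ => hne i, fun h => absurd rfl h⟩
      rw [if_pos hc1, if_pos hesc]
      simp [wt]
    · intro σ _ hσ1
      rw [if_neg (fun hc => hσ1 (honly σ hc))]
    · intro h; exact absurd (Finset.mem_univ 1) h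
  · rw [if_neg hesc]
    by_cases hfix : ∃ i, f i = Fin.castLE hkm i
    · obtain ⟨i, hi⟩ := hfix
      refine Finset.sum_eq_zero fun σ _ => ?_
      rw [if_neg]
      intro hc
      obtain ⟨h1, h2⟩ := hc i
      by_cases h : σ i = i
      · exact h1 h hi
      · exact h (Fin.castLE_injective hkm (hi ▸ (h2 h)).symm)
    · push_neg at hfix
      have h0 := mt (esc_iff hkm f).2 hesc
      push_neg at h0
      obtain ⟨i0, p, hp0, hper⟩ := h0
      have hO : ∀ i, inO hkm f i0 i → nxt f i ≠ i := by
        intro i hi hni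
        exact hfix i (by rw [← castLE_nxt hkm f i0 p hp0 hper hi, hni])
      have hinj : Function.Injective (fun i => if inO hkm f i0 i then nxt f i else i) := by
        intro x y hxy
        by_cases hx : inO hkm f i0 x <;> by_cases hy : inO hkm f i0 y <;>
          simp only [hx, hy, if_true, if_false] at hxy
        · apply nxt_injOn hkm f i0 p hp0 hper hx hy
          rw [← castLE_nxt hkm f i0 p hp0 hper hx, hxy, castLE_nxt hkm f i0 p hp0 hper hy]
        · exact absurd (hxy ▸ inO_nxt hkm f i0 p hp0 hper hx) hy
        · exact absurd (show inO hkm f i0 x from hxy ▸ inO_nxt hkm f i0 p hp0 hper hy) hx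
        · exact hxy
      set t : Equiv.Perm (Fin k) :=
        Equiv.ofBijective _ (Finite.injective_iff_bijective.mp hinj) with htdef
      have ht_apply : ∀ i, t i = if inO hkm f i0 i then nxt f i else i := fun i => rfl
      have htO : ∀ i, inO hkm f i0 i → t i = nxt f i := fun i hi => by
        rw [ht_apply, if_pos hi]
      have htnO : ∀ i, ¬ inO hkm f i0 i → t i = i := fun i hi => by
        rw [ht_apply, if_neg hi]
      have hinvnO : ∀ i, ¬ inO hkm f i0 i → t⁻¹ i = i := by
        intro i hi
        apply t.injective
        rw [(show t (t⁻¹ i) = i from t.apply_symm_apply i), htnO i hi]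
      have hinvO : ∀ i, inO hkm f i0 i → inO hkm f i0 (t⁻¹ i) := by
        intro i hi
        by_contra hc
        have h2 : t (t⁻¹ i) = t⁻¹ i := htnO _ hc
        rw [(show t (t⁻¹ i) = i from t.apply_symm_apply i)] at h2
        exact hc (h2 ▸ hi)
      have hiter : ∀ (n : ℕ) (x : Fin k), inO hkm f i0 x → (t ^ n) x = (nxt f)^[n] x := by
        intro n x hx
        rw [← Equiv.Perm.iterate_eq_pow]
        induction n with
        | zero => rfl
        | succ n ih =>
          rw [Function.iterate_succ_apply', Function.iterate_succ_apply', ih,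
            htO _ (iterate_nxt hkm f i0 p hp0 hper hx n).2]
      have hi0O : inO hkm f i0 i0 := ⟨0, rfl⟩
      have hcyc : t.IsCycle := by
        refine ⟨i0, ?_, ?_⟩
        · rw [htO i0 hi0O]; exact hO i0 hi0O
        · intro y hy
          have hyO : inO hkm f i0 y := by
            by_contra hc; exact hy (htnO y hc)
          obtain ⟨n, hn⟩ := orbit_reach hkm f i0 p hp0 hper hi0O hyO
          exact ⟨(n : ℤ), by rw [zpow_natCast, hiter n i0 hi0O, hn]⟩
      set O : Finset (Fin k) := Finset.univ.filter (inO hkm f i0) with hOdef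
      have hmemO : ∀ x, x ∈ O ↔ inO hkm f i0 x := by
        intro x; simp [hOdef]
      have hsupp : t.support = O := by
        ext i
        rw [Equiv.Perm.mem_support, hmemO]
        constructor
        · intro h; by_contra hc; exact h (htnO i hc)
        · intro h; rw [htO i h]; exact hO i h
      have hsign : (Equiv.Perm.sign t : ℤ) = -(-1) ^ O.card := by
        rw [hcyc.sign, hsupp]; push_cast; ring
      -- dichotomy and agreement on the orbit for compatible σ
      have hstep : ∀ (σ : Equiv.Perm (Fin k)), Compat hkm f σ → ∀ x, inO hkm f i0 x →
          σ x ≠ x → σ x = nxt f x ∧ σ (nxt f x) ≠ nxt f x := by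
        intro σ hσ x hx hxne
        have h2 : f x = Fin.castLE hkm (σ x) := (hσ x).2 hxne
        have hσx : σ x = nxt f x := Fin.castLE_injective hkm
          (by rw [← h2, castLE_nxt hkm f i0 p hp0 hper hx])
        refine ⟨hσx, fun hc => ?_⟩
        have h3 : nxt f x = x := σ.injective (hc.trans hσx.symm)
        exact hxne (by rw [hσx, h3])
      have hdich : ∀ (σ : Equiv.Perm (Fin k)), Compat hkm f σ → (¬ ∀ i ∈ O, σ i = i) →
          ∀ j ∈ O, σ j ≠ j := by
        intro σ hσ hne j hjO
        push_neg at hne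
        obtain ⟨i, hiO, hi⟩ := hne
        rw [hmemO] at hiO hjO
        obtain ⟨n, hn⟩ := orbit_reach hkm f i0 p hp0 hper hiO hjO
        have hall : ∀ q, σ ((nxt f)^[q] i) ≠ (nxt f)^[q] i := by
          intro q
          induction q with
          | zero => exact hi
          | succ q ih =>
            rw [Function.iterate_succ_apply']
            exact (hstep σ hσ _ (iterate_nxt hkm f i0 p hp0 hper hiO q).2 ih).2
        rw [← hn]; exact hall n
      rw [← Finset.sum_filter]
      have hti0 : t i0 ≠ i0 := by rw [htO i0 hi0O]; exact hO i0 hi0O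
      have hAval : ∀ (σ : Equiv.Perm (Fin k)), (∀ i ∈ O, σ i = i) →
          ∀ i, inO hkm f i0 i → (σ * t) i = nxt f i := by
        intro σ hcase i hiO
        rw [Equiv.Perm.mul_apply, htO i hiO,
          hcase _ (by rw [hmemO]; exact inO_nxt hkm f i0 p hp0 hper hiO)]
      have hBval : ∀ (σ : Equiv.Perm (Fin k)), Compat hkm f σ → (¬ ∀ i ∈ O, σ i = i) →
          ∀ i, inO hkm f i0 i → (σ * t⁻¹) i = i := by
        intro σ hσc hcase i hiO
        have hinv := hinvO i hiO
        rw [Equiv.Perm.mul_apply,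
          (hstep σ hσc _ hinv (hdich σ hσc hcase _ (by rw [hmemO]; exact hinv))).1,
          ← htO _ hinv, (show t (t⁻¹ i) = i from t.apply_symm_apply i)]
      have hoffA : ∀ (σ : Equiv.Perm (Fin k)) i, ¬ inO hkm f i0 i → (σ * t) i = σ i := by
        intro σ i hiO; rw [Equiv.Perm.mul_apply, htnO i hiO]
      have hoffB : ∀ (σ : Equiv.Perm (Fin k)) i, ¬ inO hkm f i0 i → (σ * t⁻¹) i = σ i := by
        intro σ i hiO; rw [Equiv.Perm.mul_apply, hinvnO i hiO]
      refine Finset.sum_involution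
        (fun σ _ => if ∀ i ∈ O, σ i = i then σ * t else σ * t⁻¹) ?_ ?_ ?_ ?_
      · -- weights cancel
        intro σ hσ
        have hσc : Compat hkm f σ := (Finset.mem_filter.mp hσ).2
        by_cases hcase : ∀ i ∈ O, σ i = i
        · simp only [if_pos hcase]
          have hOsub : O ⊆ Finset.univ.filter (fun i => σ i = i) := fun i hi =>
            Finset.mem_filter.mpr ⟨Finset.mem_univ _, hcase i hi⟩
          have hfixeq : Finset.univ.filter (fun i => (σ * t) i = i) =
              (Finset.univ.filter (fun i => σ i = i)) \ O := by
            ext i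
            simp only [Finset.mem_filter, Finset.mem_sdiff, Finset.mem_univ, true_and]
            by_cases hiO : inO hkm f i0 i
            · refine iff_of_false ?_ ?_
              · rw [hAval σ hcase i hiO]; exact hO i hiO
              · rintro ⟨-, hnO⟩; exact hnO ((hmemO i).mpr hiO)
            · rw [hoffA σ i hiO]
              simp [hmemO, hiO]
          have hcard : (Finset.univ.filter (fun i => (σ * t) i = i)).card + O.card =
              (Finset.univ.filter (fun i => σ i = i)).card := by
            rw [hfixeq]; exact Finset.card_sdiff_add_card_eq_card hOsub
          have hs : (Equiv.Perm.sign (σ * t) : ℤ) =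
              (Equiv.Perm.sign σ : ℤ) * (-(-1) ^ O.card) := by
            rw [map_mul, Units.val_mul, hsign]
          rw [wt, wt, ← hcard, hs, pow_add]
          ring
        · simp only [if_neg hcase]
          have hdisj : Disjoint (Finset.univ.filter (fun i => σ i = i)) O := by
            rw [Finset.disjoint_right]
            intro i hiO hfi
            exact hdich σ hσc hcase i hiO (Finset.mem_filter.mp hfi).2
          have hfixeq : Finset.univ.filter (fun i => (σ * t⁻¹) i = i) =
              (Finset.univ.filter (fun i => σ i = i)) ∪ O := by
            ext i
            simp only [Finset.mem_filter, Finset.mem_univ, true_and, Finset.mem_union]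
            by_cases hiO : inO hkm f i0 i
            · refine iff_of_true (hBval σ hσc hcase i hiO) (Or.inr ((hmemO i).mpr hiO))
            · rw [hoffB σ i hiO]
              simp [hmemO, hiO]
          have hcard : (Finset.univ.filter (fun i => (σ * t⁻¹) i = i)).card =
              (Finset.univ.filter (fun i => σ i = i)).card + O.card := by
            rw [hfixeq]; exact Finset.card_union_of_disjoint hdisj
          have hs : (Equiv.Perm.sign (σ * t⁻¹) : ℤ) =
              (Equiv.Perm.sign σ : ℤ) * (-(-1) ^ O.card) := by
            rw [map_mul, Units.val_mul, Equiv.Perm.sign_inv, hsign]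
          have hoo : ((-1 : ℤ) ^ O.card) * ((-1) ^ O.card) = 1 := by
            rw [← pow_add, ← two_mul, pow_mul]; norm_num
          rw [wt, wt, hcard, hs, pow_add]
          linear_combination (-(Equiv.Perm.sign σ : ℤ) *
            (-1) ^ (Finset.univ.filter (fun i => σ i = i)).card) * hoo
      · -- g σ ≠ σ
        intro σ hσ _
        show (if ∀ i ∈ O, σ i = i then σ * t else σ * t⁻¹) ≠ σ
        by_cases hcase : ∀ i ∈ O, σ i = i
        · rw [if_pos hcase]
          intro hc
          exact hti0 (by
            have : t = 1 := mul_left_cancel (a := σ) (by rw [mul_one]; exact hc)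
            rw [this]; rfl)
        · rw [if_neg hcase]
          intro hc
          have : t⁻¹ = 1 := mul_left_cancel (a := σ) (by rw [mul_one]; exact hc)
          exact hti0 (by rw [← inv_inv t, this]; rfl)
      · -- g lands in the filter (compatibility preserved)
        intro σ hσ
        have hσc : Compat hkm f σ := (Finset.mem_filter.mp hσ).2
        refine Finset.mem_filter.mpr ⟨Finset.mem_univ _, ?_⟩
        by_cases hcase : ∀ i ∈ O, σ i = i
        · simp only [if_pos hcase]
          intro i
          by_cases hiO : inO hkm f i0 i
          · have hval := hAval σ hcase i hiO
            constructor
            · intro h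
              exact absurd (hval.symm.trans h) (hO i hiO)
            · intro _
              rw [hval, castLE_nxt hkm f i0 p hp0 hper hiO]
          · rw [hoffA σ i hiO]
            exact hσc i
        · simp only [if_neg hcase]
          intro i
          by_cases hiO : inO hkm f i0 i
          · have hval := hBval σ hσc hcase i hiO
            exact ⟨fun _ => hfix i, fun h => absurd hval h⟩
          · rw [hoffB σ i hiO]
            exact hσc i
      · -- involution
        intro σ hσ
        by_cases hcase : ∀ i ∈ O, σ i = i
        · simp only [if_pos hcase]
          have hnotfix : ¬ ∀ i ∈ O, (σ * t) i = i := by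
            intro hc
            have := hc i0 (by rw [hmemO]; exact hi0O)
            rw [Equiv.Perm.mul_apply, htO i0 hi0O,
              hcase _ (by rw [hmemO]; exact inO_nxt hkm f i0 p hp0 hper hi0O)] at this
            exact hO i0 hi0O this
          simp only [if_neg hnotfix]
          exact mul_inv_cancel_right σ t
        · simp only [if_neg hcase]
          have hfixall : ∀ i ∈ O, (σ * t⁻¹) i = i := by
            intro i hiO
            rw [hmemO] at hiO
            have hinv := hinvO i hiO
            rw [Equiv.Perm.mul_apply,
              (hstep σ (Finset.mem_filter.mp hσ).2 _ hinv
                (hdich σ (Finset.mem_filter.mp hσ).2 hcase _ (by rw [hmemO]; exact hinv))).1,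
              ← htO _ hinv, (show t (t⁻¹ i) = i from t.apply_symm_apply i)]
          simp only [if_pos hfixall]
          exact inv_mul_cancel_right σ t

end Stmt5
namespace Stmt5

open scoped Classical in
lemma expand {R : Type*} [CommRing R] {k m : ℕ} (hkm : k ≤ m)
    (a : Fin k → Fin m → R) (hrow : ∀ i, ∑ j, a i j = 0) :
    Matrix.det (Matrix.of fun i j : Fin k => a i (Fin.castLE hkm j)) =
      ∑ f : Fin k → Fin m,
        (((if Esc hkm f then (-1 : ℤ) ^ k else 0) : ℤ) : R) * ∏ i, a i (f i) := by
  have step1 : Matrix.det (Matrix.of fun i j : Fin k => a i (Fin.castLE hkm j)) =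
      ∑ σ : Equiv.Perm (Fin k), ((Equiv.Perm.sign σ : ℤ) : R) *
        ∏ i, a i (Fin.castLE hkm (σ i)) := by
    rw [← Matrix.det_transpose, Matrix.det_apply']
    rfl
  set s : Equiv.Perm (Fin k) → Fin k → Finset (Fin m) := fun σ i =>
    if σ i = i then Finset.univ.erase (Fin.castLE hkm i) else {Fin.castLE hkm (σ i)} with hs
  have step2 : ∀ σ : Equiv.Perm (Fin k), ∏ i, a i (Fin.castLE hkm (σ i)) =
      ∑ f ∈ Fintype.piFinset (s σ),
        (-1 : R) ^ (Finset.univ.filter (fun i => σ i = i)).card * ∏ i, a i (f i) := by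
    intro σ
    have hfactor : ∀ i : Fin k, a i (Fin.castLE hkm (σ i)) =
        ∑ j ∈ s σ i, (if σ i = i then (-1 : R) else 1) * a i j := by
      intro i
      by_cases h : σ i = i
      · simp only [hs, h, if_pos, neg_one_mul]
        have h2 := Finset.sum_erase_add Finset.univ (a i) (Finset.mem_univ (Fin.castLE hkm i))
        rw [hrow i] at h2
        rw [Finset.sum_neg_distrib]
        linear_combination h2
      · simp [hs, h]
    calc ∏ i, a i (Fin.castLE hkm (σ i))
        = ∏ i, ∑ j ∈ s σ i, (if σ i = i then (-1 : R) else 1) * a i j :=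
          Finset.prod_congr rfl fun i _ => hfactor i
      _ = ∑ f ∈ Fintype.piFinset (s σ), ∏ i, (if σ i = i then (-1 : R) else 1) * a i (f i) :=
          Finset.prod_univ_sum _ _
      _ = ∑ f ∈ Fintype.piFinset (s σ),
            (-1 : R) ^ (Finset.univ.filter (fun i => σ i = i)).card * ∏ i, a i (f i) := by
          refine Finset.sum_congr rfl fun f _ => ?_
          rw [Finset.prod_mul_distrib, Finset.prod_ite (fun _ => (-1 : R)) (fun _ => 1),
            Finset.prod_const, Finset.prod_const, one_pow, mul_one]
  have hmem : ∀ (σ : Equiv.Perm (Fin k)) (f : Fin k → Fin m),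
      f ∈ Fintype.piFinset (s σ) ↔ Compat hkm f σ := by
    intro σ f
    rw [Fintype.mem_piFinset]
    constructor
    · intro h i
      have hi := h i
      by_cases hσ : σ i = i
      · simp only [hs, hσ, if_pos, Finset.mem_erase] at hi
        exact ⟨fun _ => hi.1, fun hc => absurd hσ hc⟩
      · simp only [hs, hσ, if_neg, Finset.mem_singleton, not_false_iff] at hi
        exact ⟨fun hc => absurd hc hσ, fun _ => hi⟩
    · intro h i
      by_cases hσ : σ i = i
      · simp only [hs, hσ, if_pos, Finset.mem_erase]
        exact ⟨(h i).1 hσ, Finset.mem_univ _⟩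
      · simp only [hs, hσ, if_neg, Finset.mem_singleton, not_false_iff]
        exact (h i).2 hσ
  rw [step1]
  calc ∑ σ : Equiv.Perm (Fin k), ((Equiv.Perm.sign σ : ℤ) : R) *
        ∏ i, a i (Fin.castLE hkm (σ i))
      = ∑ σ : Equiv.Perm (Fin k), ∑ f : Fin k → Fin m,
          (if Compat hkm f σ then ((Equiv.Perm.sign σ : ℤ) : R) *
            ((-1 : R) ^ (Finset.univ.filter (fun i => σ i = i)).card * ∏ i, a i (f i))
           else 0) := by
        refine Finset.sum_congr rfl fun σ _ => ?_
        rw [step2 σ, Finset.mul_sum, ← Finset.sum_filter]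
        refine Finset.sum_congr ?_ fun f _ => rfl
        ext f
        simp [hmem σ f]
    _ = ∑ f : Fin k → Fin m, (∑ σ : Equiv.Perm (Fin k),
          (if Compat hkm f σ then ((wt σ : ℤ) : R) else 0)) * ∏ i, a i (f i) := by
        rw [Finset.sum_comm]
        refine Finset.sum_congr rfl fun f _ => ?_
        rw [Finset.sum_mul]
        refine Finset.sum_congr rfl fun σ _ => ?_
        by_cases hc : Compat hkm f σ
        · simp only [if_pos hc, wt]
          push_cast
          ring
        · simp [if_neg hc]
    _ = ∑ f : Fin k → Fin m,
          (((if Esc hkm f then (-1 : ℤ) ^ k else 0) : ℤ) : R) * ∏ i, a i (f i) := by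
        refine Finset.sum_congr rfl fun f _ => ?_
        congr 1
        rw [← counting hkm f]
        push_cast
        rfl

end Stmt5

/-- Let `R` be a commutative ring, `1 ≤ k ≤ m`, and `(a_{ij})` a `k × m`
matrix over `R` whose rows all sum to `0`. Then the determinant of the left `k × k` block
equals `(-1)^k` times the sum, over all maps `f : {1,…,k} → {1,…,m}` with `f(S) ⊄ S` for
every nonempty `S ⊆ {1,…,k}`, of `∏ i, a i (f i)`. -/
theorem stmt5 {R : Type*} [CommRing R] (k m : ℕ) (hk : 1 ≤ k) (hkm : k ≤ m)
    (a : Fin k → Fin m → R) (hrow : ∀ i, ∑ j, a i j = 0) :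
    Matrix.det (Matrix.of fun i j : Fin k => a i (Fin.castLE hkm j)) =
      (-1) ^ k *
        ∑ f ∈ Finset.univ.filter (fun f : Fin k → Fin m =>
            ∀ S : Finset (Fin k), S.Nonempty → ∃ i ∈ S, f i ∉ S.image (Fin.castLE hkm)),
          ∏ i, a i (f i) := by
  classical
  rw [Stmt5.expand hkm a hrow, Finset.mul_sum]
  have hfeq : (Finset.univ.filter (fun f : Fin k → Fin m => ∀ S : Finset (Fin k), S.Nonempty →
      ∃ i ∈ S, f i ∉ S.image (Fin.castLE hkm))) = Finset.univ.filter (Stmt5.Esc hkm) := by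
    ext f
    simp only [Finset.mem_filter]
    exact and_congr_right fun _ => Iff.rfl
  rw [hfeq, Finset.sum_filter]
  refine Finset.sum_congr rfl fun f _ => ?_
  by_cases h : Stmt5.Esc hkm f
  · rw [if_pos h, if_pos h]
    push_cast
    ring
  · rw [if_neg h, if_neg h]
    push_cast
    ring
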